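/- Let A ∈ ℝ^{(N+1)×(N+1)} be any matrix with zero diagonal and entries in {0,1} satisfying the comparison property A_{i₁,i₂} + A_{i₂,i₁} ≤ 1 for all i₁ ≠ i₂. Define S(A) = {i : ∑_{i'} A_{i,i'} ≥ (1−α)(N+1)}. Then |S(A)| < 2α(N+1). -/

import Mathlib

open Finset

/-- For a zero-diagonal {0,1}-matrix A on [N+1] with A_{ij} + A_{ji} ≤ 1 for
i ≠ j, the set S(A) = {i : ∑_{i'} A_{i,i'} ≥ (1−α)(N+1)} satisfies |S(A)| < 2α(N+1). -/
theorem strange_set_card_lt (N : ℕ) (α : ℝ) (hα : 0 < α)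
    (A : Matrix (Fin (N + 1)) (Fin (N + 1)) ℝ)
    (h01 : ∀ i j, A i j = 0 ∨ A i j = 1)
    (hdiag : ∀ i, A i i = 0)
    (hcomp : ∀ i j, i ≠ j → A i j + A j i ≤ 1) :
    ((Finset.univ.filter (fun i : Fin (N + 1) =>
        (1 - α) * ((N : ℝ) + 1) ≤ ∑ j, A i j)).card : ℝ) < 2 * α * ((N : ℝ) + 1) := by
  set S := Finset.univ.filter (fun i : Fin (N + 1) =>
      (1 - α) * ((N : ℝ) + 1) ≤ ∑ j, A i j) with hS
  set s : ℝ := (S.card : ℝ) with hs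
  have hnonneg : ∀ i j, 0 ≤ A i j := by
    intro i j; rcases h01 i j with h | h <;> simp [h]
  have hle1 : ∀ i j, A i j ≤ 1 := by
    intro i j; rcases h01 i j with h | h <;> simp [h]
  -- Step 1: s * (1-α)(N+1) ≤ ∑_{i∈S} ∑_j A i j
  have h1 : s * ((1 - α) * ((N : ℝ) + 1)) ≤ ∑ i ∈ S, ∑ j, A i j := by
    calc s * ((1 - α) * ((N : ℝ) + 1)) = ∑ _i ∈ S, (1 - α) * ((N : ℝ) + 1) := by
          rw [Finset.sum_const, nsmul_eq_mul]
      _ ≤ ∑ i ∈ S, ∑ j, A i j := by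
          apply Finset.sum_le_sum
          intro i hi
          exact (Finset.mem_filter.mp hi).2
  -- split inner sums
  have hsplit : ∀ i, (∑ j, A i j) = (∑ j ∈ S, A i j) + ∑ j ∈ Sᶜ, A i j := by
    intro i
    rw [Finset.sum_add_sum_compl]
  -- Step 3: inner part ≤ (s^2 - s)/2
  have h3 : ∑ i ∈ S, ∑ j ∈ S, A i j ≤ (s * s - s) / 2 := by
    have key : 2 * (∑ i ∈ S, ∑ j ∈ S, A i j) ≤ s * s - s := by
      have : 2 * (∑ i ∈ S, ∑ j ∈ S, A i j)
          = ∑ i ∈ S, ∑ j ∈ S, (A i j + A j i) := by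
        have hc : ∑ i ∈ S, ∑ j ∈ S, A j i = ∑ i ∈ S, ∑ j ∈ S, A i j :=
          Finset.sum_comm
        calc 2 * (∑ i ∈ S, ∑ j ∈ S, A i j)
            = (∑ i ∈ S, ∑ j ∈ S, A i j) + ∑ i ∈ S, ∑ j ∈ S, A j i := by
              rw [hc]; ring
          _ = ∑ i ∈ S, ∑ j ∈ S, (A i j + A j i) := by
              rw [← Finset.sum_add_distrib]
              exact Finset.sum_congr rfl (fun i _ => (Finset.sum_add_distrib).symm)
      rw [this]
      calc ∑ i ∈ S, ∑ j ∈ S, (A i j + A j i)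
          ≤ ∑ i ∈ S, ∑ j ∈ S, (if i = j then (0:ℝ) else 1) := by
            apply Finset.sum_le_sum; intro i _
            apply Finset.sum_le_sum; intro j _
            by_cases h : i = j
            · simp [h, hdiag]
            · simp [h]; exact hcomp i j h
        _ = ∑ i ∈ S, (s - 1) := by
            apply Finset.sum_congr rfl
            intro i hi
            rw [← Finset.sum_erase_add S _ hi]
            simp only [if_pos rfl, add_zero]
            rw [Finset.sum_congr rfl (fun j hj => if_neg (Finset.ne_of_mem_erase hj).symm)]
            rw [Finset.sum_const, nsmul_eq_mul, mul_one, Finset.cast_card_erase_of_mem hi, hs]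
            simp
        _ = s * (s - 1) := by rw [Finset.sum_const, nsmul_eq_mul]
        _ = s * s - s := by ring
    linarith
  -- Step 4: outer part ≤ s * (N+1-s)
  have h4 : ∑ i ∈ S, ∑ j ∈ Sᶜ, A i j ≤ s * (((N : ℝ) + 1) - s) := by
    have hcard : ((Sᶜ : Finset (Fin (N+1))).card : ℝ) = ((N : ℝ) + 1) - s := by
      rw [Finset.card_compl]
      have : S.card ≤ Fintype.card (Fin (N+1)) := Finset.card_le_univ S
      push_cast [Nat.cast_sub this]
      simp [hs]
    calc ∑ i ∈ S, ∑ j ∈ Sᶜ, A i j ≤ ∑ _i ∈ S, ∑ _j ∈ Sᶜ, (1:ℝ) := by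
          apply Finset.sum_le_sum; intro i _
          apply Finset.sum_le_sum; intro j _
          exact hle1 i j
      _ = s * (((N : ℝ) + 1) - s) := by
          simp [Finset.sum_const, nsmul_eq_mul, hcard, hs]
          ring
  have hmain : s * ((1 - α) * ((N : ℝ) + 1)) ≤ (s * s - s) / 2 + s * (((N : ℝ) + 1) - s) := by
    calc s * ((1 - α) * ((N : ℝ) + 1)) ≤ ∑ i ∈ S, ∑ j, A i j := h1
      _ = (∑ i ∈ S, ∑ j ∈ S, A i j) + ∑ i ∈ S, ∑ j ∈ Sᶜ, A i j := by
          rw [← Finset.sum_add_distrib]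
          exact Finset.sum_congr rfl (fun i _ => hsplit i)
      _ ≤ (s * s - s) / 2 + s * (((N : ℝ) + 1) - s) := add_le_add h3 h4
  -- conclude
  by_cases h0 : S.card = 0
  · rw [hs, h0]
    norm_num
    positivity
  · have hs1 : (1:ℝ) ≤ s := by
      have : 1 ≤ S.card := Nat.one_le_iff_ne_zero.mpr h0
      rw [hs]; exact_mod_cast this
    have hN : (0:ℝ) < (N : ℝ) + 1 := by positivity
    nlinarith [mul_pos hα hN]
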